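/- For ℓ ∈ {0,1} and every n ≥ 0, for each fixed x ∈ ℝ the function ζ ↦ P_{n+1}^(ℓ)(x;ζ) is differentiable on (0,∞) and ∂P_{n+1}^(ℓ)/∂ζ (x;ζ) = a_n^(ℓ)·P_n^(ℓ)(x;ζ) − (1/2)·(G(ζ) − ζ^{−1} − b_{n+1}^(ℓ))·P_{n+1}^(ℓ)(x;ζ). -/

import Mathlib

open MeasureTheory Polynomial Set

noncomputable def besselK (n : ℕ) (ζ : ℝ) : ℝ :=
  ∫ t in Set.Ioi (0 : ℝ), Real.cosh ((n : ℝ) * t) * Real.exp (-ζ * Real.cosh t)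

noncomputable def Gfun (ζ : ℝ) : ℝ := besselK 2 ζ / besselK 1 ζ

noncomputable def wgt (ℓ : ℕ) (ζ x : ℝ) : ℝ :=
  (x ^ 2 - 1) ^ ((ℓ : ℝ) - 1 / 2) * Real.exp (-ζ * x) / besselK 1 ζ

noncomputable def ker (ℓ : ℕ) (t x : ℝ) : ℝ :=
  (x ^ 2 - 1) ^ ((ℓ : ℝ) - 1 / 2) * Real.exp (-t * x)

noncomputable def Mom (ℓ r : ℕ) (t : ℝ) : ℝ :=
  ∫ x in Set.Ioi (1 : ℝ), x ^ r * ker ℓ t x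


lemma contOn_ker (ℓ : ℕ) (t : ℝ) (r : ℕ) :
    ContinuousOn (fun x : ℝ => x ^ r * ker ℓ t x) (Ioi 1) := by
  apply (continuousOn_pow r).mul
  apply ContinuousOn.mul
  · apply ContinuousOn.rpow_const ((continuousOn_pow 2).sub continuousOn_const)
    intro x hx
    simp only [mem_Ioi] at hx
    exact Or.inl (show x ^ 2 - 1 ≠ 0 by nlinarith)
  · exact (Real.continuous_exp.comp (continuous_const.mul continuous_id)).continuousOn

lemma aesm_ker (ℓ : ℕ) (t : ℝ) (r : ℕ) {s : Set ℝ} (hs : MeasurableSet s) (hsub : s ⊆ Ioi 1) :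
    AEStronglyMeasurable (fun x : ℝ => x ^ r * ker ℓ t x) (volume.restrict s) :=
  (((contOn_ker ℓ t r).mono hsub)).aestronglyMeasurable hs

lemma ker_nonneg (ℓ : ℕ) (t : ℝ) {x : ℝ} (hx : 1 < x) : 0 ≤ ker ℓ t x := by
  have h1 : (0:ℝ) < x ^ 2 - 1 := by nlinarith
  exact mul_nonneg (Real.rpow_nonneg h1.le _) (Real.exp_nonneg _)

lemma integrableOn_pow_ker {ℓ : ℕ} (hℓ : ℓ ≤ 1) {t : ℝ} (ht : 0 < t) (r : ℕ) :
    IntegrableOn (fun x : ℝ => x ^ r * ker ℓ t x) (Ioi 1) := by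
  have hsplit : Ioi (1:ℝ) = Ioc 1 2 ∪ Ioi 2 := by
    rw [Set.Ioc_union_Ioi_eq_Ioi]; norm_num
  rw [hsplit]
  apply IntegrableOn.union
  · -- on Ioc 1 2
    have hbd : IntegrableOn (fun x : ℝ => (2:ℝ)^r * ((x-1) ^ (-(1/2):ℝ) + 2)) (Ioc 1 2) := by
      apply Integrable.const_mul
      apply Integrable.add _ (integrableOn_const measure_Ioc_lt_top.ne)
      have h1 : IntervalIntegrable (fun x : ℝ => x ^ (-(1/2):ℝ)) volume 0 1 :=
        intervalIntegral.intervalIntegrable_rpow' (by norm_num)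
      have h2 := h1.comp_sub_right 1
      rw [zero_add] at h2
      norm_num at h2
      exact (intervalIntegrable_iff_integrableOn_Ioc_of_le (by norm_num)).1 h2
    apply Integrable.mono' hbd (aesm_ker ℓ t r measurableSet_Ioc (fun x hx => hx.1))
    filter_upwards [ae_restrict_mem measurableSet_Ioc] with x hx
    obtain ⟨hx1, hx2⟩ := hx
    have hx0 : (0:ℝ) < x := by linarith
    have hq : (0:ℝ) < x ^ 2 - 1 := by nlinarith
    rw [Real.norm_eq_abs, abs_mul, abs_of_nonneg (ker_nonneg ℓ t hx1),
      abs_of_nonneg (pow_nonneg hx0.le r)]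
    have he : Real.exp (-t * x) ≤ 1 := by
      rw [Real.exp_le_one_iff]; nlinarith
    have hker : ker ℓ t x ≤ (x-1) ^ (-(1/2):ℝ) + 2 := by
      unfold ker
      have hB : (x ^ 2 - 1) ^ ((ℓ:ℝ) - 1/2) ≤ (x-1) ^ (-(1/2):ℝ) + 2 := by
        interval_cases ℓ
        · have : (x ^ 2 - 1) ^ ((0:ℝ) - 1/2) ≤ (x-1) ^ (-(1/2):ℝ) := by
            have hlt : x - 1 ≤ x ^ 2 - 1 := by nlinarith
            have := Real.rpow_le_rpow_of_nonpos (by linarith) hlt (by norm_num : -(1/2:ℝ) ≤ 0)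
            simpa using this
          have hpos : (0:ℝ) ≤ (x-1) ^ (-(1/2):ℝ) := Real.rpow_nonneg (by linarith) _
          push_cast
          linarith
        · have h3 : x ^ 2 - 1 ≤ 3 := by nlinarith
          have : (x ^ 2 - 1) ^ ((1:ℝ) - 1/2) ≤ (3:ℝ) ^ ((1:ℝ) - 1/2) :=
            Real.rpow_le_rpow hq.le h3 (by norm_num)
          have h32 : (3:ℝ) ^ ((1:ℝ) - 1/2) ≤ 2 := by
            rw [show (1:ℝ) - 1/2 = 1/2 by norm_num, ← Real.sqrt_eq_rpow]
            have h4 : Real.sqrt 3 ≤ Real.sqrt 4 := Real.sqrt_le_sqrt (by norm_num)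
            rwa [show (4:ℝ) = 2^2 by norm_num, Real.sqrt_sq (by norm_num : (0:ℝ) ≤ 2)] at h4
          have hpos : (0:ℝ) ≤ (x-1) ^ (-(1/2):ℝ) := Real.rpow_nonneg (by linarith) _
          push_cast
          linarith
      calc (x ^ 2 - 1) ^ ((ℓ:ℝ) - 1/2) * Real.exp (-t * x)
          ≤ (x ^ 2 - 1) ^ ((ℓ:ℝ) - 1/2) * 1 :=
            mul_le_mul_of_nonneg_left he (Real.rpow_nonneg hq.le _)
        _ = (x ^ 2 - 1) ^ ((ℓ:ℝ) - 1/2) := mul_one _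
        _ ≤ (x-1) ^ (-(1/2):ℝ) + 2 := hB
    calc x ^ r * ker ℓ t x ≤ 2 ^ r * ker ℓ t x :=
          mul_le_mul_of_nonneg_right (pow_le_pow_left₀ hx0.le hx2 r) (ker_nonneg ℓ t hx1)
      _ ≤ 2 ^ r * ((x-1) ^ (-(1/2):ℝ) + 2) :=
          mul_le_mul_of_nonneg_left hker (by positivity)
  · -- on Ioi 2
    have hbd : IntegrableOn (fun x : ℝ => x ^ (r+1) * Real.exp (-t * x)) (Ioi 2) := by
      have := integrableOn_rpow_mul_exp_neg_mul_rpow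
        (by exact_mod_cast neg_one_lt_zero.trans_le (Nat.cast_nonneg (r+1)) : (-1:ℝ) < (r+1:ℕ))
        (zero_lt_one : (0:ℝ) < 1) ht
      have h2 : IntegrableOn (fun x : ℝ => x ^ ((r+1:ℕ):ℝ) * Real.exp (-t * x ^ (1:ℝ))) (Ioi 2) :=
        this.mono_set (Ioi_subset_Ioi (by norm_num))
      apply h2.congr_fun _ measurableSet_Ioi
      intro x hx
      simp only [Real.rpow_natCast, Real.rpow_one]
    apply Integrable.mono' hbd (aesm_ker ℓ t r measurableSet_Ioi (Ioi_subset_Ioi (by norm_num)))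
    filter_upwards [ae_restrict_mem measurableSet_Ioi] with x hx
    simp only [mem_Ioi] at hx
    have hx1 : (1:ℝ) < x := by linarith
    have hq : (0:ℝ) < x ^ 2 - 1 := by nlinarith
    rw [Real.norm_eq_abs, abs_mul, abs_of_nonneg (ker_nonneg ℓ t hx1),
      abs_of_nonneg (pow_nonneg (by linarith : (0:ℝ) ≤ x) r)]
    have hker : ker ℓ t x ≤ x * Real.exp (-t * x) := by
      unfold ker
      apply mul_le_mul_of_nonneg_right _ (Real.exp_nonneg _)
      interval_cases ℓ
      · have h1 : (x ^ 2 - 1) ^ ((0:ℝ) - 1/2) ≤ 1 := by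
          apply Real.rpow_le_one_of_one_le_of_nonpos (by nlinarith) (by norm_num)
        push_cast; linarith
      · have : (x ^ 2 - 1) ^ ((1:ℝ) - 1/2) ≤ (x^2) ^ ((1:ℝ)-1/2) :=
          Real.rpow_le_rpow hq.le (by nlinarith) (by norm_num)
        have hxx : (x^2) ^ ((1:ℝ)-1/2) = x := by
          rw [show (1:ℝ) - 1/2 = 1/2 by norm_num, ← Real.sqrt_eq_rpow,
            Real.sqrt_sq (by linarith : (0:ℝ) ≤ x)]
        push_cast; rw [hxx] at this; exact this
    calc x ^ r * ker ℓ t x ≤ x ^ r * (x * Real.exp (-t * x)) :=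
          mul_le_mul_of_nonneg_left hker (pow_nonneg (by linarith) r)
      _ = x ^ (r+1) * Real.exp (-t * x) := by ring



lemma hasDerivAt_Mom {ℓ : ℕ} (hℓ : ℓ ≤ 1) {ζ : ℝ} (hζ : 0 < ζ) (r : ℕ) :
    HasDerivAt (Mom ℓ r) (-Mom ℓ (r+1) ζ) ζ := by
  have key := hasDerivAt_integral_of_dominated_loc_of_deriv_le
    (μ := volume.restrict (Ioi (1:ℝ))) (x₀ := ζ)
    (F := fun t x => x ^ r * ker ℓ t x)
    (F' := fun t x => -(x ^ (r+1) * ker ℓ t x))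
    (bound := fun x => x ^ (r+1) * ker ℓ (ζ/2) x)
    (Metric.ball_mem_nhds ζ (half_pos hζ))
    (Filter.Eventually.of_forall fun t => aesm_ker ℓ t r measurableSet_Ioi subset_rfl)
    (integrableOn_pow_ker hℓ hζ r)
    ((aesm_ker ℓ ζ (r+1) measurableSet_Ioi subset_rfl).neg)
    ?_ (integrableOn_pow_ker hℓ (half_pos hζ) (r+1)) ?_
  · have : (∫ x in Ioi (1:ℝ), -(x ^ (r+1) * ker ℓ ζ x)) = -Mom ℓ (r+1) ζ := by
      rw [integral_neg]; rfl
    rw [← this]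
    exact key.2
  · -- bound
    filter_upwards [ae_restrict_mem measurableSet_Ioi] with x hx t ht
    simp only [mem_Ioi] at hx
    simp only [Metric.mem_ball, Real.dist_eq] at ht
    have htl : ζ/2 < t := by cases' abs_lt.1 ht with h1 h2; linarith
    have hq : (0:ℝ) < x ^ 2 - 1 := by nlinarith
    rw [norm_neg, Real.norm_eq_abs, abs_mul, abs_of_nonneg (ker_nonneg ℓ t hx),
      abs_of_nonneg (pow_nonneg (by linarith : (0:ℝ) ≤ x) _)]
    unfold ker
    have : Real.exp (-t * x) ≤ Real.exp (-(ζ/2) * x) := by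
      apply Real.exp_le_exp.2; nlinarith
    calc x ^ (r+1) * ((x ^ 2 - 1) ^ ((ℓ:ℝ) - 1/2) * Real.exp (-t * x))
        ≤ x ^ (r+1) * ((x ^ 2 - 1) ^ ((ℓ:ℝ) - 1/2) * Real.exp (-(ζ/2) * x)) := by
          apply mul_le_mul_of_nonneg_left _ (pow_nonneg (by linarith) _)
          exact mul_le_mul_of_nonneg_left this (Real.rpow_nonneg hq.le _)
      _ = x ^ (r+1) * ker ℓ (ζ/2) x := rfl
  · -- differentiability
    filter_upwards [ae_restrict_mem measurableSet_Ioi] with x hx t _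
    simp only [mem_Ioi] at hx
    have h1 : HasDerivAt (fun t : ℝ => Real.exp (-t * x)) (-x * Real.exp (-t * x)) t := by
      have h0 : HasDerivAt (fun t : ℝ => -t * x) (-x) t := by
        simpa using ((hasDerivAt_id t).neg.mul_const x)
      simpa [mul_comm] using h0.exp
    have h2 := (h1.const_mul ((x ^ 2 - 1) ^ ((ℓ:ℝ) - 1/2))).const_mul (x ^ r)
    refine h2.congr_deriv ?_
    unfold ker; ring

lemma cosh_image : Real.cosh '' (Ioi 0) = Ioi (1:ℝ) := by
  apply Subset.antisymm
  · rintro y ⟨t, ht, rfl⟩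
    simp only [mem_Ioi] at *
    exact Real.one_lt_cosh.2 (ne_of_gt ht)
  · intro y hy
    simp only [mem_Ioi] at hy
    have h2y : y < Real.cosh (2*y) := by
      rw [Real.cosh_eq]
      have h1 : (1+y)^2 ≤ Real.exp (2*y) := by
        have := Real.add_one_le_exp y
        calc (1+y)^2 ≤ (Real.exp y)^2 := by nlinarith [Real.exp_pos y]
          _ = Real.exp (2*y) := by rw [← Real.exp_nat_mul]; norm_num [mul_comm]
      nlinarith [Real.exp_pos (-(2*y))]
    have hmem : y ∈ Set.Icc (Real.cosh 0) (Real.cosh (2*y)) := by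
      rw [Real.cosh_zero]; exact ⟨hy.le, h2y.le⟩
    obtain ⟨t, ht, hct⟩ := intermediate_value_Icc (by linarith) Real.continuous_cosh.continuousOn hmem
    refine ⟨t, ?_, hct⟩
    simp only [mem_Ioi]
    rcases eq_or_lt_of_le ht.1 with h | h
    · exfalso; rw [← h, Real.cosh_zero] at hct; linarith
    · exact h

lemma cosh_injOn : Set.InjOn Real.cosh (Ioi 0) :=
  (Real.cosh_strictMonoOn.mono (Ioi_subset_Ici le_rfl)).injOn

lemma cosh_hasDerivWithin : ∀ t ∈ Ioi (0:ℝ),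
    HasDerivWithinAt Real.cosh (Real.sinh t) (Ioi 0) t :=
  fun t _ => (Real.hasDerivAt_cosh t).hasDerivWithinAt

lemma abs_sinh_smul (ζ : ℝ) (r : ℕ) {t : ℝ} (ht : t ∈ Ioi (0:ℝ)) :
    |Real.sinh t| • (Real.cosh t ^ r * ker 0 ζ (Real.cosh t))
      = Real.cosh t ^ r * Real.exp (-ζ * Real.cosh t) := by
  simp only [mem_Ioi] at ht
  have hs : 0 < Real.sinh t := Real.sinh_pos_iff.2 ht
  unfold ker
  have h1 : Real.cosh t ^ 2 - 1 = Real.sinh t ^ 2 := by rw [Real.sinh_sq]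
  have h2 : (Real.sinh t ^ 2 : ℝ) ^ ((0:ℕ) - 1/2 : ℝ) = (Real.sinh t)⁻¹ := by
    rw [← Real.rpow_natCast (Real.sinh t) 2, ← Real.rpow_mul hs.le]
    norm_num
    rw [Real.rpow_neg_one]
  rw [smul_eq_mul, h1, h2, abs_of_pos hs]
  field_simp

lemma mom_eq_cosh (ζ : ℝ) (r : ℕ) :
    Mom 0 r ζ = ∫ t in Ioi (0:ℝ), Real.cosh t ^ r * Real.exp (-ζ * Real.cosh t) := by
  unfold Mom
  rw [← cosh_image, integral_image_eq_integral_abs_deriv_smul measurableSet_Ioi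
    cosh_hasDerivWithin cosh_injOn]
  exact setIntegral_congr_fun measurableSet_Ioi fun t ht => abs_sinh_smul ζ r ht

lemma integrableOn_cosh_pow {ℓ : ℕ} (hℓ : ℓ ≤ 1) {ζ : ℝ} (hζ : 0 < ζ) (r : ℕ) :
    IntegrableOn (fun t => Real.cosh t ^ r * Real.exp (-ζ * Real.cosh t)) (Ioi (0:ℝ)) := by
  have h := (integrableOn_image_iff_integrableOn_abs_deriv_smul measurableSet_Ioi
    cosh_hasDerivWithin cosh_injOn (fun x => x ^ r * ker 0 ζ x)).1
  rw [cosh_image] at h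
  have h2 := h (integrableOn_pow_ker (by norm_num) hζ r)
  exact h2.congr_fun (fun t ht => abs_sinh_smul ζ r ht) measurableSet_Ioi

lemma besselK_one_eq {ζ : ℝ} (hζ : 0 < ζ) : besselK 1 ζ = Mom 0 1 ζ := by
  rw [mom_eq_cosh, besselK]
  apply setIntegral_congr_fun measurableSet_Ioi
  intro t _
  norm_num

lemma besselK_two_eq {ζ : ℝ} (hζ : 0 < ζ) : besselK 2 ζ = 2 * Mom 0 2 ζ - Mom 0 0 ζ := by
  rw [mom_eq_cosh, mom_eq_cosh, besselK]
  rw [← integral_const_mul, ← integral_sub ((integrableOn_cosh_pow le_rfl hζ 2).const_mul 2)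
    (by simpa using (integrableOn_cosh_pow le_rfl hζ 0).integrable)]
  apply setIntegral_congr_fun measurableSet_Ioi
  intro t _
  have : Real.cosh ((2:ℕ) * t) = 2 * Real.cosh t ^ 2 - 1 := by
    push_cast
    rw [Real.cosh_two_mul, Real.sinh_sq]; ring
  simp only [this]
  ring

lemma mom_pos {ℓ : ℕ} (hℓ : ℓ ≤ 1) {ζ : ℝ} (hζ : 0 < ζ) (r : ℕ) : 0 < Mom ℓ r ζ := by
  unfold Mom
  rw [setIntegral_pos_iff_support_of_nonneg_ae]
  · have : Ioi (1:ℝ) ⊆ Function.support (fun x => x ^ r * ker ℓ ζ x) ∩ Ioi 1 := by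
      intro x hx
      simp only [mem_Ioi] at hx
      refine ⟨?_, hx⟩
      have hq : (0:ℝ) < x ^ 2 - 1 := by nlinarith
      have : 0 < x ^ r * ker ℓ ζ x := by
        apply mul_pos (pow_pos (by linarith) r)
        exact mul_pos (Real.rpow_pos_of_pos hq _) (Real.exp_pos _)
      exact ne_of_gt this
    have h2 := measure_mono (μ := volume) this
    rw [Real.volume_Ioi] at h2
    exact lt_of_lt_of_le (by simp) h2
  · filter_upwards [ae_restrict_mem measurableSet_Ioi] with x hx
    simp only [mem_Ioi] at hx
    exact mul_nonneg (pow_nonneg (by linarith) r) (ker_nonneg ℓ ζ hx)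
  · exact integrableOn_pow_ker hℓ hζ r

lemma mom_parts {ζ : ℝ} (hζ : 0 < ζ) : ζ * Mom 1 0 ζ = Mom 0 1 ζ := by
  set Φ : ℝ → ℝ := fun x => -((x^2-1) ^ ((1:ℝ)/2) * Real.exp (-ζ * x)) with hΦ
  have hderiv : ∀ x ∈ Ioi (1:ℝ), HasDerivAt Φ
      (ζ * ker 1 ζ x - x ^ 1 * ker 0 ζ x) x := by
    intro x hx
    simp only [mem_Ioi] at hx
    have hq : (0:ℝ) < x ^ 2 - 1 := by nlinarith
    have h1 : HasDerivAt (fun x : ℝ => (x^2-1) ^ ((1:ℝ)/2))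
        (x * (x^2-1) ^ (-(1:ℝ)/2)) x := by
      have hin : HasDerivAt (fun x : ℝ => x^2-1) (2*x) x := by
        simpa using ((hasDerivAt_pow 2 x).sub_const 1)
      have hout := Real.hasDerivAt_rpow_const (p := (1:ℝ)/2) (Or.inl (ne_of_gt hq))
      have := HasDerivAt.comp x hout hin
      refine this.congr_deriv ?_
      rw [show (1:ℝ)/2 - 1 = -(1/2) by norm_num]
      ring_nf
    have h2 : HasDerivAt (fun x : ℝ => Real.exp (-ζ * x)) (-ζ * Real.exp (-ζ * x)) x := by
      have h0 : HasDerivAt (fun x : ℝ => -ζ * x) (-ζ) x := by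
        simpa using (hasDerivAt_id x).const_mul (-ζ)
      simpa [mul_comm] using h0.exp
    have := (h1.mul h2).neg
    refine this.congr_deriv ?_
    unfold ker
    push_cast
    rw [show ((1:ℝ) - 1/2) = 1/2 by norm_num, show ((0:ℝ) - 1/2) = -1/2 by norm_num]
    ring_nf
  have hA : IntegrableOn (fun x => ζ * ker 1 ζ x) (Ioi 1) := by
    have h0 : IntegrableOn (fun x : ℝ => ζ * (x ^ 0 * ker 1 ζ x)) (Ioi 1) :=
      (integrableOn_pow_ker le_rfl hζ 0).const_mul ζ
    exact h0.congr_fun (fun x _ => by simp) measurableSet_Ioi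
  have hint : IntegrableOn (fun x => ζ * ker 1 ζ x - x ^ 1 * ker 0 ζ x) (Ioi 1) :=
    hA.sub (integrableOn_pow_ker (by norm_num) hζ 1)
  have hcont : ContinuousWithinAt Φ (Ici 1) 1 := by
    apply Continuous.continuousWithinAt
    apply Continuous.neg
    apply Continuous.mul
    · exact (Real.continuous_rpow_const (by norm_num)).comp
        ((continuous_pow 2).sub continuous_const)
    · exact Real.continuous_exp.comp (continuous_const.mul continuous_id)
  have htend : Filter.Tendsto Φ Filter.atTop (nhds 0) := by
    have hub : ∀ᶠ x in Filter.atTop, -(x * Real.exp (-ζ * x)) ≤ Φ x ∧ Φ x ≤ 0 := by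
      filter_upwards [Filter.eventually_ge_atTop (1:ℝ)] with x hx
      have hq : (0:ℝ) ≤ x ^ 2 - 1 := by nlinarith
      constructor
      · simp only [hΦ, neg_le_neg_iff]
        apply mul_le_mul_of_nonneg_right _ (Real.exp_nonneg _)
        calc (x^2-1) ^ ((1:ℝ)/2) ≤ (x^2) ^ ((1:ℝ)/2) :=
              Real.rpow_le_rpow hq (by nlinarith) (by norm_num)
          _ = x := by rw [← Real.sqrt_eq_rpow, Real.sqrt_sq (by linarith)]
      · simp only [hΦ, neg_nonpos]
        exact mul_nonneg (Real.rpow_nonneg hq _) (Real.exp_nonneg _)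
    have hlow : Filter.Tendsto (fun x : ℝ => -(x * Real.exp (-ζ * x))) Filter.atTop (nhds 0) := by
      rw [show (0:ℝ) = -0 by norm_num]
      apply Filter.Tendsto.neg
      have h1 : Filter.Tendsto (fun y : ℝ => (1/ζ) * (y ^ 1 * Real.exp (-y)))
          Filter.atTop (nhds ((1/ζ) * 0)) :=
        (Real.tendsto_pow_mul_exp_neg_atTop_nhds_zero 1).const_mul _
      have h2 : Filter.Tendsto (fun x : ℝ => ζ * x) Filter.atTop Filter.atTop :=
        Filter.Tendsto.const_mul_atTop hζ Filter.tendsto_id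
      have h3 := h1.comp h2
      simp only [mul_zero] at h3
      convert h3 using 2 with x
      simp only [Function.comp_apply, pow_one]
      field_simp
    apply tendsto_of_tendsto_of_tendsto_of_le_of_le' hlow tendsto_const_nhds
    · exact hub.mono fun x h => h.1
    · exact hub.mono fun x h => h.2
  have key := integral_Ioi_of_hasDerivAt_of_tendsto hcont hderiv hint htend
  have hΦ1 : Φ 1 = 0 := by
    simp only [hΦ]
    norm_num
  rw [hΦ1, sub_zero] at key
  have e1 : (∫ x in Ioi (1:ℝ), (ζ * ker 1 ζ x - x ^ 1 * ker 0 ζ x))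
      = ζ * Mom 1 0 ζ - Mom 0 1 ζ := by
    rw [integral_sub hA (integrableOn_pow_ker (by norm_num) hζ 1), integral_const_mul]
    have : (∫ x in Ioi (1:ℝ), ker 1 ζ x) = Mom 1 0 ζ := by
      unfold Mom
      exact setIntegral_congr_fun measurableSet_Ioi fun x _ => by simp
    rw [this]
    rfl
  rw [e1] at key
  linarith

lemma mom_sub {ζ : ℝ} (hζ : 0 < ζ) : Mom 0 2 ζ - Mom 0 0 ζ = Mom 1 0 ζ := by
  unfold Mom
  rw [← integral_sub (integrableOn_pow_ker (by norm_num) hζ 2)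
    (integrableOn_pow_ker (by norm_num) hζ 0)]
  apply setIntegral_congr_fun measurableSet_Ioi
  intro x hx
  simp only [mem_Ioi] at hx
  have hq : (0:ℝ) < x ^ 2 - 1 := by nlinarith
  unfold ker
  have : (x^2-1) ^ ((1:ℕ) - 1/2 : ℝ) = (x^2-1) * (x^2-1) ^ ((0:ℕ) - 1/2 : ℝ) := by
    push_cast
    rw [show (1:ℝ) - 1/2 = 1 + (0 - 1/2) by norm_num, Real.rpow_add hq, Real.rpow_one]
  simp only
  rw [this]
  ring

lemma besselK_one_pos {ζ : ℝ} (hζ : 0 < ζ) : 0 < besselK 1 ζ := by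
  rw [besselK_one_eq hζ]; exact mom_pos (by norm_num) hζ 1

lemma Gsub {ζ : ℝ} (hζ : 0 < ζ) : Gfun ζ - ζ⁻¹ = Mom 0 2 ζ / Mom 0 1 ζ := by
  have hM1 : Mom 0 1 ζ = ζ * Mom 1 0 ζ := (mom_parts hζ).symm
  have hN : 0 < Mom 1 0 ζ := mom_pos le_rfl hζ 0
  have hsub := mom_sub hζ
  rw [Gfun, besselK_one_eq hζ, besselK_two_eq hζ]
  rw [hM1]
  field_simp
  linear_combination hsub



noncomputable def Dpoly (P : ℝ → ℕ → Polynomial ℝ) (ζ : ℝ) (m : ℕ) : Polynomial ℝ :=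
  ∑ i ∈ Finset.range (m+1), Polynomial.monomial i (deriv (fun t => (P t m).coeff i) ζ)

lemma Dpoly_coeff (P : ℝ → ℕ → Polynomial ℝ) (ζ : ℝ) (m i : ℕ) (hi : i < m + 1) :
    (Dpoly P ζ m).coeff i = deriv (fun t => (P t m).coeff i) ζ := by
  unfold Dpoly
  rw [Polynomial.finset_sum_coeff]
  rw [Finset.sum_eq_single i]
  · simp
  · intro j _ hj; simp [Polynomial.coeff_monomial, hj]
  · intro h; exact absurd (Finset.mem_range.2 hi) h

lemma Dpoly_natDegree_le (P : ℝ → ℕ → Polynomial ℝ) (ζ : ℝ) (m : ℕ) :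
    (Dpoly P ζ m).natDegree ≤ m := by
  apply Polynomial.natDegree_sum_le_of_forall_le
  intro i hi
  exact (Polynomial.natDegree_monomial_le _).trans (Nat.lt_succ_iff.1 (Finset.mem_range.1 hi))

lemma integrableOn_poly_ker {ℓ : ℕ} (hℓ : ℓ ≤ 1) {t : ℝ} (ht : 0 < t) (p : Polynomial ℝ)
    (e : ℕ) : IntegrableOn (fun x : ℝ => p.eval x * x ^ e * ker ℓ t x) (Ioi 1) := by
  have hpt : ∀ x : ℝ, p.eval x * x ^ e * ker ℓ t x
      = ∑ i ∈ Finset.range (p.natDegree + 1), p.coeff i * (x ^ (i+e) * ker ℓ t x) := by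
    intro x
    rw [Polynomial.eval_eq_sum_range, Finset.sum_mul, Finset.sum_mul]
    apply Finset.sum_congr rfl
    intro i _
    rw [pow_add]; ring
  simp only [hpt]
  exact integrable_finset_sum _ fun i _ => (integrableOn_pow_ker hℓ ht (i+e)).const_mul _

lemma integral_poly_expand {ℓ : ℕ} (hℓ : ℓ ≤ 1) {t : ℝ} (ht : 0 < t) {p q : Polynomial ℝ}
    {M K : ℕ} (hp : p.natDegree < M) (hq : q.natDegree < K) (e : ℕ) :
    (∫ x in Ioi (1:ℝ), p.eval x * q.eval x * x ^ e * ker ℓ t x)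
      = ∑ i ∈ Finset.range M, ∑ j ∈ Finset.range K,
          p.coeff i * q.coeff j * Mom ℓ (i+j+e) t := by
  have hpt : ∀ x : ℝ, p.eval x * q.eval x * x ^ e * ker ℓ t x
      = ∑ i ∈ Finset.range M, ∑ j ∈ Finset.range K,
          p.coeff i * q.coeff j * (x ^ (i+j+e) * ker ℓ t x) := by
    intro x
    rw [Polynomial.eval_eq_sum_range' hp, Polynomial.eval_eq_sum_range' hq,
      Finset.sum_mul_sum, Finset.sum_mul, Finset.sum_mul]
    apply Finset.sum_congr rfl
    intro i _
    rw [Finset.sum_mul, Finset.sum_mul]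
    apply Finset.sum_congr rfl
    intro j _
    rw [pow_add, pow_add]; ring
  simp only [hpt]
  rw [integral_finset_sum _ fun i _ => integrable_finset_sum _
    fun j _ => ((integrableOn_pow_ker hℓ ht (i+j+e)).const_mul _)]
  apply Finset.sum_congr rfl
  intro i _
  rw [integral_finset_sum _ fun j _ => ((integrableOn_pow_ker hℓ ht (i+j+e)).const_mul _)]
  apply Finset.sum_congr rfl
  intro j _
  rw [integral_const_mul]
  rfl

noncomputable def pint (ℓ : ℕ) (t : ℝ) (p q : Polynomial ℝ) : ℝ :=
  ∫ x in Set.Ioi (1 : ℝ), p.eval x * q.eval x * ker ℓ t x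

lemma pint_comm (ℓ : ℕ) (t : ℝ) (p q : Polynomial ℝ) : pint ℓ t p q = pint ℓ t q p := by
  unfold pint
  apply setIntegral_congr_fun measurableSet_Ioi
  intro x _; ring

lemma pint_eq_e0 (ℓ : ℕ) (t : ℝ) (p q : Polynomial ℝ) :
    pint ℓ t p q = ∫ x in Ioi (1:ℝ), p.eval x * q.eval x * x ^ 0 * ker ℓ t x := by
  unfold pint
  apply setIntegral_congr_fun measurableSet_Ioi
  intro x _; ring

lemma pint_expand {ℓ : ℕ} (hℓ : ℓ ≤ 1) {t : ℝ} (ht : 0 < t) {p q : Polynomial ℝ}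
    {M K : ℕ} (hp : p.natDegree < M) (hq : q.natDegree < K) :
    pint ℓ t p q = ∑ i ∈ Finset.range M, ∑ j ∈ Finset.range K,
      p.coeff i * q.coeff j * Mom ℓ (i+j) t := by
  rw [pint_eq_e0, integral_poly_expand hℓ ht hp hq 0]
  simp

lemma integrableOn_pq {ℓ : ℕ} (hℓ : ℓ ≤ 1) {t : ℝ} (ht : 0 < t) (p q : Polynomial ℝ) :
    IntegrableOn (fun x : ℝ => p.eval x * q.eval x * ker ℓ t x) (Ioi 1) := by
  have := integrableOn_poly_ker hℓ ht (p*q) 0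
  apply this.congr_fun _ measurableSet_Ioi
  intro x _
  simp only [Polynomial.eval_mul, pow_zero, mul_one]

lemma pint_Cmul_right {ℓ : ℕ} (t : ℝ) (c : ℝ) (p q : Polynomial ℝ) :
    pint ℓ t p (Polynomial.C c * q) = c * pint ℓ t p q := by
  unfold pint
  rw [← integral_const_mul]
  apply setIntegral_congr_fun measurableSet_Ioi
  intro x _
  simp [Polynomial.eval_mul]; ring

lemma pint_sub_right {ℓ : ℕ} (hℓ : ℓ ≤ 1) {t : ℝ} (ht : 0 < t) (p q₁ q₂ : Polynomial ℝ) :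
    pint ℓ t p (q₁ - q₂) = pint ℓ t p q₁ - pint ℓ t p q₂ := by
  unfold pint
  rw [← integral_sub (integrableOn_pq hℓ ht p q₁) (integrableOn_pq hℓ ht p q₂)]
  apply setIntegral_congr_fun measurableSet_Ioi
  intro x _
  simp [Polynomial.eval_sub]; ring

lemma pint_sum_right {ℓ : ℕ} (hℓ : ℓ ≤ 1) {t : ℝ} (ht : 0 < t) (p : Polynomial ℝ)
    {ι : Type*} (s : Finset ι) (f : ι → Polynomial ℝ) :
    pint ℓ t p (∑ k ∈ s, f k) = ∑ k ∈ s, pint ℓ t p (f k) := by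
  unfold pint
  have hpt : ∀ x : ℝ, p.eval x * (∑ k ∈ s, f k).eval x * ker ℓ t x
      = ∑ k ∈ s, p.eval x * (f k).eval x * ker ℓ t x := by
    intro x
    rw [Polynomial.eval_finset_sum, Finset.mul_sum, Finset.sum_mul]
  simp only [hpt]
  exact integral_finset_sum _ fun k _ => integrableOn_pq hℓ ht p (f k)


theorem stmt9
    (ℓ : ℕ) (hℓ : ℓ ≤ 1)
    (P : ℝ → ℕ → Polynomial ℝ) (lc : ℝ → ℕ → ℝ)
    (hdeg : ∀ ζ : ℝ, 0 < ζ → ∀ n, (P ζ n).natDegree = n)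
    (hlc : ∀ ζ : ℝ, 0 < ζ → ∀ n, (P ζ n).leadingCoeff = lc ζ n)
    (hlcpos : ∀ ζ : ℝ, 0 < ζ → ∀ n, 0 < lc ζ n)
    (horth : ∀ ζ : ℝ, 0 < ζ → ∀ m n, (∫ x in Set.Ioi (1 : ℝ),
        (P ζ m).eval x * (P ζ n).eval x * wgt ℓ ζ x) = if m = n then (1 : ℝ) else 0)
    (hcoeff : ∀ n k, DifferentiableOn ℝ (fun ζ => (P ζ n).coeff k) (Set.Ioi 0))
    (a b : ℝ → ℕ → ℝ)
    (ha : ∀ ζ n, a ζ n = lc ζ n / lc ζ (n + 1))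
    (hb : ∀ ζ : ℝ, 0 < ζ → ∀ n, b ζ n =
      ∫ x in Set.Ioi (1 : ℝ), x * ((P ζ n).eval x) ^ 2 * wgt ℓ ζ x) :
    ∀ ζ : ℝ, 0 < ζ → ∀ n : ℕ, ∀ x : ℝ,
      HasDerivAt (fun t => (P t (n + 1)).eval x)
        (a ζ n * (P ζ n).eval x
          - 1 / 2 * (Gfun ζ - ζ⁻¹ - b ζ (n + 1)) * (P ζ (n + 1)).eval x) ζ := by
  intro ζ hζ n
  -- basic positivity
  have hBpos : ∀ t : ℝ, 0 < t → 0 < besselK 1 t := fun t ht => besselK_one_pos ht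
  have hBne : besselK 1 ζ ≠ 0 := (hBpos ζ hζ).ne'
  -- orthonormality in terms of pint
  have hPP : ∀ t : ℝ, 0 < t → ∀ m k, pint ℓ t (P t m) (P t k)
      = (if m = k then (1:ℝ) else 0) * besselK 1 t := by
    intro t ht m k
    have h := horth t ht m k
    have hw : (∫ x in Set.Ioi (1 : ℝ), (P t m).eval x * (P t k).eval x * wgt ℓ t x)
        = pint ℓ t (P t m) (P t k) / besselK 1 t := by
      unfold pint
      rw [← MeasureTheory.integral_div]
      apply setIntegral_congr_fun measurableSet_Ioi
      intro x _
      unfold wgt ker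
      ring
    rw [hw, div_eq_iff (hBpos t ht).ne'] at h
    rw [h]
  -- coefficient at natDegree
  have hcoefftop : ∀ t : ℝ, 0 < t → ∀ m, (P t m).coeff m = lc t m := by
    intro t ht m
    have h := hlc t ht m
    rwa [Polynomial.leadingCoeff, hdeg t ht m] at h
  -- span
  have SPAN : ∀ N : ℕ, ∀ q : Polynomial ℝ, q.natDegree ≤ N →
      ∃ μ : ℕ → ℝ, q = ∑ k ∈ Finset.range (N+1), Polynomial.C (μ k) * P ζ k := by
    intro N
    induction N with
    | zero =>
      intro q hq
      refine ⟨fun _ => q.coeff 0 / lc ζ 0, ?_⟩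
      have hP0 : P ζ 0 = Polynomial.C (lc ζ 0) := by
        have h := Polynomial.eq_C_of_natDegree_le_zero (le_of_eq (hdeg ζ hζ 0))
        rw [h, hcoefftop ζ hζ 0]
      rw [Finset.range_one, Finset.sum_singleton, hP0, ← Polynomial.C_mul,
        div_mul_cancel₀ _ (ne_of_gt (hlcpos ζ hζ 0))]
      exact Polynomial.eq_C_of_natDegree_le_zero hq
    | succ N ih =>
      intro q hq
      set c := q.coeff (N+1) / lc ζ (N+1) with hc
      have hdeg' : (q - Polynomial.C c * P ζ (N+1)).natDegree ≤ N := by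
        rw [Polynomial.natDegree_le_iff_coeff_eq_zero]
        intro m hm
        rw [Polynomial.coeff_sub, Polynomial.coeff_C_mul]
        rcases eq_or_lt_of_le (Nat.succ_le_of_lt hm) with h | h
        · rw [← h, hcoefftop ζ hζ (N+1), hc,
            div_mul_cancel₀ _ (ne_of_gt (hlcpos ζ hζ (N+1))), sub_self]
        · rw [Polynomial.coeff_eq_zero_of_natDegree_lt (lt_of_le_of_lt hq h),
            Polynomial.coeff_eq_zero_of_natDegree_lt (by rw [hdeg ζ hζ (N+1)]; exact h),
            mul_zero, sub_self]
      obtain ⟨μ, hμ⟩ := ih _ hdeg'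
      refine ⟨fun k => if k = N+1 then c else μ k, ?_⟩
      rw [Finset.sum_range_succ]
      simp only [if_true]
      have hsum : ∑ k ∈ Finset.range (N+1),
          Polynomial.C (if k = N+1 then c else μ k) * P ζ k
          = ∑ k ∈ Finset.range (N+1), Polynomial.C (μ k) * P ζ k := by
        apply Finset.sum_congr rfl
        intro k hk
        have : k ≠ N+1 := by have := Finset.mem_range.1 hk; omega
        rw [if_neg this]
      rw [hsum, ← hμ]
      ring
  -- high orthogonality
  have horthH : ∀ (q : Polynomial ℝ) (N m : ℕ), q.natDegree ≤ N → N < m →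
      pint ℓ ζ (P ζ m) q = 0 := by
    intro q N m hq hNm
    obtain ⟨μ, hμ⟩ := SPAN N q hq
    rw [hμ, pint_sum_right hℓ hζ]
    apply Finset.sum_eq_zero
    intro k hk
    rw [pint_Cmul_right, hPP ζ hζ m k]
    have : m ≠ k := by have := Finset.mem_range.1 hk; omega
    simp [this]
  -- uniqueness
  have hUNIQ : ∀ (q : Polynomial ℝ) (N : ℕ), q.natDegree ≤ N →
      (∀ k, k ≤ N → pint ℓ ζ q (P ζ k) = 0) → q = 0 := by
    intro q N hq h0
    obtain ⟨μ, hμ⟩ := SPAN N q hq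
    have hμ0 : ∀ k ∈ Finset.range (N+1), μ k = 0 := by
      intro k hk
      have h := h0 k (Nat.lt_succ_iff.1 (Finset.mem_range.1 hk))
      rw [pint_comm, hμ, pint_sum_right hℓ hζ] at h
      have hterm : ∀ j ∈ Finset.range (N+1),
          pint ℓ ζ (P ζ k) (Polynomial.C (μ j) * P ζ j)
            = if j = k then μ k * besselK 1 ζ else 0 := by
        intro j hj
        rw [pint_Cmul_right, hPP ζ hζ k j]
        by_cases hjk : j = k
        · simp [hjk]
        · have : k ≠ j := fun hh => hjk hh.symm
          simp [hjk, this]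
      rw [Finset.sum_congr rfl hterm, Finset.sum_ite_eq' (Finset.range (N+1)) k] at h
      rw [if_pos hk] at h
      exact (mul_eq_zero.1 h).resolve_right hBne
    rw [hμ]
    apply Finset.sum_eq_zero
    intro k hk
    rw [hμ0 k hk]
    simp
  -- derivative of coefficients
  have hdc : ∀ m i, HasDerivAt (fun t => (P t m).coeff i) ((Dpoly P ζ m).coeff i) ζ := by
    intro m i
    by_cases hi : i < m + 1
    · rw [Dpoly_coeff P ζ m i hi]
      exact ((hcoeff m i).differentiableAt (isOpen_Ioi.mem_nhds hζ)).hasDerivAt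
    · push_neg at hi
      have h0 : (Dpoly P ζ m).coeff i = 0 :=
        Polynomial.coeff_eq_zero_of_natDegree_lt
          (lt_of_le_of_lt (Dpoly_natDegree_le P ζ m) (by omega))
      rw [h0]
      apply (hasDerivAt_const ζ (0:ℝ)).congr_of_eventuallyEq
      filter_upwards [isOpen_Ioi.mem_nhds hζ] with t ht
      exact Polynomial.coeff_eq_zero_of_natDegree_lt (by rw [hdeg t ht m]; omega)
  -- key differentiated orthogonality relation
  have hJ : ∀ m k : ℕ, pint ℓ ζ (Dpoly P ζ m) (P ζ k) + pint ℓ ζ (P ζ m) (Dpoly P ζ k)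
      - (∫ x in Ioi (1:ℝ), (P ζ m).eval x * (P ζ k).eval x * x ^ 1 * ker ℓ ζ x)
      = (if m = k then (1:ℝ) else 0) * (-(Mom 0 2 ζ)) := by
    intro m k
    set J : ℝ → ℝ := fun t => pint ℓ t (P t m) (P t k) with hJdef
    have hmem : Ioi (0:ℝ) ∈ nhds ζ := isOpen_Ioi.mem_nhds hζ
    have hJ1 : HasDerivAt J ((if m = k then (1:ℝ) else 0) * (-(Mom 0 2 ζ))) ζ := by
      have hM : HasDerivAt (fun t => (if m = k then (1:ℝ) else 0) * Mom 0 1 t)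
          ((if m = k then (1:ℝ) else 0) * (-(Mom 0 2 ζ))) ζ :=
        (hasDerivAt_Mom (by norm_num) hζ 1).const_mul _
      apply hM.congr_of_eventuallyEq
      filter_upwards [hmem] with t ht
      rw [hJdef]
      simp only
      rw [hPP t ht m k, besselK_one_eq ht]
    have hJ2 : HasDerivAt J
        (∑ i ∈ Finset.range (m+1), ∑ j ∈ Finset.range (k+1),
          (((Dpoly P ζ m).coeff i * (P ζ k).coeff j
            + (P ζ m).coeff i * (Dpoly P ζ k).coeff j) * Mom ℓ (i+j) ζ
          + (P ζ m).coeff i * (P ζ k).coeff j * (-(Mom ℓ (i+j+1) ζ)))) ζ := by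
      have hS : HasDerivAt (fun t => ∑ i ∈ Finset.range (m+1), ∑ j ∈ Finset.range (k+1),
          (P t m).coeff i * (P t k).coeff j * Mom ℓ (i+j) t)
          (∑ i ∈ Finset.range (m+1), ∑ j ∈ Finset.range (k+1),
          (((Dpoly P ζ m).coeff i * (P ζ k).coeff j
            + (P ζ m).coeff i * (Dpoly P ζ k).coeff j) * Mom ℓ (i+j) ζ
          + (P ζ m).coeff i * (P ζ k).coeff j * (-(Mom ℓ (i+j+1) ζ)))) ζ := by
        apply HasDerivAt.fun_sum
        intro i _
        apply HasDerivAt.fun_sum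
        intro j _
        exact ((hdc m i).mul (hdc k j)).mul (hasDerivAt_Mom hℓ hζ (i+j))
      apply hS.congr_of_eventuallyEq
      filter_upwards [hmem] with t ht
      rw [hJdef]
      simp only
      rw [pint_expand hℓ ht (by rw [hdeg t ht m]; exact Nat.lt_succ_self m)
        (by rw [hdeg t ht k]; exact Nat.lt_succ_self k)]
    have huniq := hJ1.unique hJ2
    rw [huniq]
    have e1 : pint ℓ ζ (Dpoly P ζ m) (P ζ k)
        = ∑ i ∈ Finset.range (m+1), ∑ j ∈ Finset.range (k+1),
          (Dpoly P ζ m).coeff i * (P ζ k).coeff j * Mom ℓ (i+j) ζ :=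
      pint_expand hℓ hζ (Nat.lt_succ_of_le (Dpoly_natDegree_le P ζ m))
        (by rw [hdeg ζ hζ k]; exact Nat.lt_succ_self k)
    have e2 : pint ℓ ζ (P ζ m) (Dpoly P ζ k)
        = ∑ i ∈ Finset.range (m+1), ∑ j ∈ Finset.range (k+1),
          (P ζ m).coeff i * (Dpoly P ζ k).coeff j * Mom ℓ (i+j) ζ :=
      pint_expand hℓ hζ (by rw [hdeg ζ hζ m]; exact Nat.lt_succ_self m)
        (Nat.lt_succ_of_le (Dpoly_natDegree_le P ζ k))
    have e3 : (∫ x in Ioi (1:ℝ), (P ζ m).eval x * (P ζ k).eval x * x ^ 1 * ker ℓ ζ x)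
        = ∑ i ∈ Finset.range (m+1), ∑ j ∈ Finset.range (k+1),
          (P ζ m).coeff i * (P ζ k).coeff j * Mom ℓ (i+j+1) ζ :=
      integral_poly_expand hℓ hζ (by rw [hdeg ζ hζ m]; exact Nat.lt_succ_self m)
        (by rw [hdeg ζ hζ k]; exact Nat.lt_succ_self k) 1
    rw [e1, e2, e3, ← Finset.sum_add_distrib, ← Finset.sum_sub_distrib]
    apply Finset.sum_congr rfl
    intro i _
    rw [← Finset.sum_add_distrib, ← Finset.sum_sub_distrib]
    apply Finset.sum_congr rfl
    intro j _
    ring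
  -- evaluate W := pint with extra x factor
  have hW : ∀ k : ℕ, (∫ x in Ioi (1:ℝ),
      (P ζ (n+1)).eval x * (P ζ k).eval x * x ^ 1 * ker ℓ ζ x)
      = pint ℓ ζ (P ζ (n+1)) (Polynomial.X * P ζ k) := by
    intro k
    unfold pint
    apply setIntegral_congr_fun measurableSet_Ioi
    intro x _
    simp only [Polynomial.eval_mul, Polynomial.eval_X]
    ring
  have hPne : ∀ k, P ζ k ≠ 0 := by
    intro k h
    have := hlc ζ hζ k
    rw [h] at this
    simp at this
    exact absurd this.symm (ne_of_gt (hlcpos ζ hζ k))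
  have hWlt : ∀ k, k < n → pint ℓ ζ (P ζ (n+1)) (Polynomial.X * P ζ k) = 0 := by
    intro k hk
    apply horthH _ n (n+1) _ (Nat.lt_succ_self n)
    calc (Polynomial.X * P ζ k).natDegree ≤ 1 + (P ζ k).natDegree :=
          le_trans Polynomial.natDegree_mul_le (by simp [Polynomial.natDegree_X])
      _ ≤ n := by rw [hdeg ζ hζ k]; omega
  have hWn : pint ℓ ζ (P ζ (n+1)) (Polynomial.X * P ζ n) = a ζ n * besselK 1 ζ := by
    have hq : (Polynomial.X * P ζ n - Polynomial.C (a ζ n) * P ζ (n+1)).natDegree ≤ n := by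
      rw [Polynomial.natDegree_le_iff_coeff_eq_zero]
      intro m hm
      obtain ⟨m', rfl⟩ : ∃ m', m = m' + 1 := ⟨m - 1, by omega⟩
      rw [Polynomial.coeff_sub, Polynomial.coeff_C_mul, Polynomial.coeff_X_mul]
      rcases eq_or_ne m' n with h | h
      · subst h
        rw [hcoefftop ζ hζ m', hcoefftop ζ hζ (m'+1),
          ha ζ m', div_mul_cancel₀ _ (ne_of_gt (hlcpos ζ hζ (m'+1))), sub_self]
      · have h1 : (P ζ n).coeff m' = 0 := by
          apply Polynomial.coeff_eq_zero_of_natDegree_lt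
          rw [hdeg ζ hζ n]; omega
        have h2 : (P ζ (n+1)).coeff (m'+1) = 0 := by
          apply Polynomial.coeff_eq_zero_of_natDegree_lt
          rw [hdeg ζ hζ (n+1)]; omega
        rw [h1, h2, mul_zero, sub_zero]
    have hz := horthH _ n (n+1) hq (Nat.lt_succ_self n)
    rw [pint_sub_right hℓ hζ, pint_Cmul_right, hPP ζ hζ (n+1) (n+1)] at hz
    simp at hz
    linarith
  have hWnn : (∫ x in Ioi (1:ℝ),
      (P ζ (n+1)).eval x * (P ζ (n+1)).eval x * x ^ 1 * ker ℓ ζ x)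
      = b ζ (n+1) * besselK 1 ζ := by
    have hbv := hb ζ hζ (n+1)
    have hw2 : (∫ x in Set.Ioi (1:ℝ), x * ((P ζ (n+1)).eval x) ^ 2 * wgt ℓ ζ x)
        = (∫ x in Ioi (1:ℝ),
          (P ζ (n+1)).eval x * (P ζ (n+1)).eval x * x ^ 1 * ker ℓ ζ x) / besselK 1 ζ := by
      rw [← MeasureTheory.integral_div]
      apply setIntegral_congr_fun measurableSet_Ioi
      intro x _
      unfold wgt ker
      ring
    rw [hw2] at hbv
    rw [hbv, div_mul_cancel₀ _ hBne]
  -- the polynomial identity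
  have hDP : ∀ k, k ≤ n+1 → pint ℓ ζ (Dpoly P ζ (n+1)) (P ζ k)
      = (if k = n then a ζ n * besselK 1 ζ else 0)
        + (if k = n+1 then (b ζ (n+1) * besselK 1 ζ - Mom 0 2 ζ) / 2 else 0) := by
    intro k hk
    have hJk := hJ (n+1) k
    rcases lt_trichotomy k n with h | h | h
    · rw [hW k, hWlt k h] at hJk
      have hz1 : pint ℓ ζ (P ζ (n+1)) (Dpoly P ζ k) = 0 :=
        horthH _ n (n+1) ((Dpoly_natDegree_le P ζ k).trans (by omega)) (Nat.lt_succ_self n)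
      rw [hz1] at hJk
      rw [if_neg (by omega : ¬ n+1 = k)] at hJk
      rw [if_neg (by omega : ¬ k = n), if_neg (by omega : ¬ k = n+1)]
      linarith
    · subst h
      rw [hW k, hWn] at hJk
      have hz1 : pint ℓ ζ (P ζ (k+1)) (Dpoly P ζ k) = 0 :=
        horthH _ k (k+1) (Dpoly_natDegree_le P ζ k) (Nat.lt_succ_self k)
      rw [hz1] at hJk
      rw [if_neg (by omega : ¬ k+1 = k)] at hJk
      rw [if_pos rfl, if_neg (by omega : ¬ k = k+1)]
      linarith
    · have hk1 : k = n+1 := by omega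
      subst hk1
      rw [hWnn] at hJk
      rw [if_pos rfl] at hJk
      have hsym : pint ℓ ζ (P ζ (n+1)) (Dpoly P ζ (n+1))
          = pint ℓ ζ (Dpoly P ζ (n+1)) (P ζ (n+1)) := pint_comm ℓ ζ _ _
      rw [hsym] at hJk
      rw [if_neg (by omega : ¬ n+1 = n), if_pos rfl]
      linarith
  have hRP : ∀ k, k ≤ n+1 → pint ℓ ζ
      (Polynomial.C (a ζ n) * P ζ n
        - Polynomial.C (1 / 2 * (Gfun ζ - ζ⁻¹ - b ζ (n+1))) * P ζ (n+1)) (P ζ k)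
      = (if k = n then a ζ n * besselK 1 ζ else 0)
        + (if k = n+1 then -(1 / 2 * (Gfun ζ - ζ⁻¹ - b ζ (n+1))) * besselK 1 ζ else 0) := by
    intro k hk
    rw [pint_comm, pint_sub_right hℓ hζ, pint_Cmul_right, pint_Cmul_right,
      hPP ζ hζ k n, hPP ζ hζ k (n+1)]
    rcases lt_trichotomy k n with h | h | h
    · rw [if_neg (by omega : ¬ k = n), if_neg (by omega : ¬ k = n+1),
        if_neg (by omega : ¬ k = n), if_neg (by omega : ¬ k = n+1)]
      ring
    · subst h
      rw [if_pos rfl, if_neg (by omega : ¬ k = k+1), if_pos rfl,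
        if_neg (by omega : ¬ k = k+1)]
      ring
    · have hk1 : k = n+1 := by omega
      subst hk1
      rw [if_pos rfl, if_neg (by omega : ¬ n+1 = n), if_pos rfl,
        if_neg (by omega : ¬ n+1 = n)]
      ring
  have hc2B : -(1 / 2 * (Gfun ζ - ζ⁻¹ - b ζ (n+1))) * besselK 1 ζ
      = (b ζ (n+1) * besselK 1 ζ - Mom 0 2 ζ) / 2 := by
    have hM1 : Mom 0 1 ζ ≠ 0 := (mom_pos (by norm_num) hζ 1).ne'
    have h2 : (Gfun ζ - ζ⁻¹) * Mom 0 1 ζ = Mom 0 2 ζ := by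
      rw [Gsub hζ]
      field_simp
    rw [besselK_one_eq hζ]
    linear_combination (-(1:ℝ)/2) * h2
  have hDReq : Dpoly P ζ (n+1) = Polynomial.C (a ζ n) * P ζ n
      - Polynomial.C (1 / 2 * (Gfun ζ - ζ⁻¹ - b ζ (n+1))) * P ζ (n+1) := by
    rw [← sub_eq_zero]
    apply hUNIQ _ (n+1)
    · apply le_trans (Polynomial.natDegree_sub_le _ _)
      apply max_le (Dpoly_natDegree_le P ζ (n+1))
      apply le_trans (Polynomial.natDegree_sub_le _ _)
      apply max_le
      · exact le_trans (Polynomial.natDegree_C_mul_le _ _) (by rw [hdeg ζ hζ n]; omega)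
      · exact le_trans (Polynomial.natDegree_C_mul_le _ _) (le_of_eq (hdeg ζ hζ (n+1)))
    · intro k hk
      have hsp : pint ℓ ζ (Dpoly P ζ (n+1)
            - (Polynomial.C (a ζ n) * P ζ n
              - Polynomial.C (1 / 2 * (Gfun ζ - ζ⁻¹ - b ζ (n+1))) * P ζ (n+1))) (P ζ k)
          = pint ℓ ζ (Dpoly P ζ (n+1)) (P ζ k)
            - pint ℓ ζ (Polynomial.C (a ζ n) * P ζ n
              - Polynomial.C (1 / 2 * (Gfun ζ - ζ⁻¹ - b ζ (n+1))) * P ζ (n+1)) (P ζ k) := by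
        rw [pint_comm, pint_sub_right hℓ hζ, pint_comm ℓ ζ (P ζ k) _,
          pint_comm ℓ ζ (P ζ k) _]
      rw [hsp, hDP k hk, hRP k hk, hc2B]
      ring
  -- final derivative statement
  intro x
  have hrep : HasDerivAt (fun t => (P t (n+1)).eval x) ((Dpoly P ζ (n+1)).eval x) ζ := by
    have hS : HasDerivAt (fun t => ∑ i ∈ Finset.range (n+2), (P t (n+1)).coeff i * x ^ i)
        (∑ i ∈ Finset.range (n+2), (Dpoly P ζ (n+1)).coeff i * x ^ i) ζ := by
      apply HasDerivAt.fun_sum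
      intro i _
      exact (hdc (n+1) i).mul_const _
    have hDeval : (Dpoly P ζ (n+1)).eval x
        = ∑ i ∈ Finset.range (n+2), (Dpoly P ζ (n+1)).coeff i * x ^ i := by
      rw [Polynomial.eval_eq_sum_range' (Nat.lt_succ_of_le (Dpoly_natDegree_le P ζ (n+1)))]
    rw [hDeval]
    apply hS.congr_of_eventuallyEq
    filter_upwards [isOpen_Ioi.mem_nhds hζ] with t ht
    rw [Polynomial.eval_eq_sum_range' (by rw [hdeg t ht (n+1)]; exact Nat.lt_succ_self (n+1))]
  have heval : (Dpoly P ζ (n+1)).eval x = a ζ n * (P ζ n).eval x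
      - 1 / 2 * (Gfun ζ - ζ⁻¹ - b ζ (n+1)) * (P ζ (n+1)).eval x := by
    rw [hDReq]
    simp
  rwa [heval] at hrep
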